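/- In the setting of the AdiaConvert construction, for every x, y ∈ 𝕏, s ∈ [0,1] and ε ∈ (0,1], the states |Ψ_x^+(s,ε)⟩ and |Ψ_y^−(s,ε)⟩ are orthogonal: ⟨Ψ_x^+(s,ε)|Ψ_y^−(s,ε)⟩ = 0. In particular, Λ(s,ε)|Ψ_x^+(s,ε)⟩ = 0 for every x ∈ 𝕏. -/

import Mathlib

noncomputable section
open scoped ComplexConjugate

namespace AdiaConvert

/-- Index type of the Hilbert space `H = H_O ⊕ (ℂⁿ ⊗ ℂ^{Σ∪{0̄}} ⊗ H_W)`, where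
`H_O = ℂ² ⊗ H'`, `H' = ℂ^V`, `H_W = ℂ^W`, and the blank symbol `0̄` is `Option.none`. -/
abbrev Idx (Al V W : Type*) (n : ℕ) : Type _ := (Fin 2 × V) ⊕ (Fin n × Option Al × W)

/-- The Hilbert space of the AdiaConvert algorithm. -/
abbrev Hsp (Al V W : Type*) (n : ℕ) : Type _ := EuclideanSpace ℂ (Idx Al V W n)

/-- Build a vector of `Hsp` from its coordinates. -/
def mk {Al V W : Type*} {n : ℕ} (f : Idx Al V W n → ℂ) : Hsp Al V W n :=
  (WithLp.equiv 2 _).symm f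

variable {Al V W X : Type*} {n : ℕ}

/-- `θ(s) = πs/2`. -/
def θ (s : ℝ) : ℝ := Real.pi * s / 2

/-- `ξ(s) = 2 cos θ(s) sin θ(s)`. -/
def ξ (s : ℝ) : ℝ := 2 * Real.cos (θ s) * Real.sin (θ s)

/-- The coordinates of `|y⁺⟩ = (|0̄⟩ + |y⟩)/√2`. -/
def gP [DecidableEq Al] (y : Al) : Option Al → ℂ := fun a =>
  if a = none then (Real.sqrt 2 : ℂ)⁻¹ else if a = some y then (Real.sqrt 2 : ℂ)⁻¹ else 0

/-- The coordinates of `|y⁻⟩ = (|0̄⟩ - |y⟩)/√2`. -/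
def gM [DecidableEq Al] (y : Al) : Option Al → ℂ := fun a =>
  if a = none then (Real.sqrt 2 : ℂ)⁻¹ else if a = some y then -(Real.sqrt 2 : ℂ)⁻¹ else 0

/-- `|k_x⁺(s)⟩ = cos θ(s) |0,ρ_x⟩ + sin θ(s) |1,σ_x⟩` (embedded in `H`). -/
def kP (ρv σv : X → EuclideanSpace ℂ V) (s : ℝ) (x : X) : Hsp Al V W n :=
  mk fun q => match q with
  | .inl (b, i) => if b = 0 then (Real.cos (θ s) : ℂ) * ρv x i
                   else (Real.sin (θ s) : ℂ) * σv x i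
  | .inr _ => 0

/-- `|k_x⁻(s)⟩ = -sin θ(s) |0,ρ_x⟩ + cos θ(s) |1,σ_x⟩` (embedded in `H`). -/
def kM (ρv σv : X → EuclideanSpace ℂ V) (s : ℝ) (x : X) : Hsp Al V W n :=
  mk fun q => match q with
  | .inl (b, i) => if b = 0 then -(Real.sin (θ s) : ℂ) * ρv x i
                   else (Real.cos (θ s) : ℂ) * σv x i
  | .inr _ => 0

/-- `∑ᵢ |i⟩ ⊗ |x_i^±⟩ ⊗ |c_{x,i}⟩` (embedded in `H`), where the `ℂ^{Σ∪{0̄}}` part has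
coordinates `g (x_i)`. -/
def qPart (g : Al → Option Al → ℂ) (inp : X → Fin n → Al)
    (c : X → Fin n → EuclideanSpace ℂ W) (x : X) : Hsp Al V W n :=
  mk fun q => match q with
  | .inl _ => 0
  | .inr (i, a, w) => g (inp x i) a * c x i w

/-- The non-normalized state `|Ψ_x⁺(s,ε)⟩`. -/
def PsiP [DecidableEq Al] (ρv σv : X → EuclideanSpace ℂ V) (inp : X → Fin n → Al)
    (u : X → Fin n → EuclideanSpace ℂ W) (Wr s ε : ℝ) (x : X) : Hsp Al V W n :=
  kP ρv σv s x + ((ε / Real.sqrt Wr : ℝ) : ℂ) • qPart gP inp u x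

/-- The non-normalized state `|Ψ_x⁻(s,ε)⟩`. -/
def PsiM [DecidableEq Al] (ρv σv : X → EuclideanSpace ℂ V) (inp : X → Fin n → Al)
    (v : X → Fin n → EuclideanSpace ℂ W) (Wr s ε : ℝ) (x : X) : Hsp Al V W n :=
  kM ρv σv s x + ((ξ s * (Real.sqrt Wr / ε) : ℝ) : ℂ) • qPart gM inp v x

/-- The normalized state `|ψ_x⁺(s,ε)⟩`. -/
def psiP [Fintype Al] [Fintype V] [Fintype W] [DecidableEq Al] (ρv σv : X → EuclideanSpace ℂ V) (inp : X → Fin n → Al)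
    (u : X → Fin n → EuclideanSpace ℂ W) (Wr s ε : ℝ) (x : X) : Hsp Al V W n :=
  ‖PsiP ρv σv inp u Wr s ε x‖⁻¹ • PsiP ρv σv inp u Wr s ε x

/-- The rank-one operator `|a⟩⟨b| : v ↦ ⟨b|v⟩·a`. -/
def ketbra [Fintype Al] [Fintype V] [Fintype W]
    (a b : Hsp Al V W n) : Hsp Al V W n →L[ℂ] Hsp Al V W n :=
  (innerSL ℂ b).smulRight a

/-- The orthogonal projection `Λ(s,ε)` onto `span{|Ψ_x⁻(s,ε)⟩ : x ∈ 𝕏}`. -/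
def Lam [Fintype Al] [Fintype V] [Fintype W] [DecidableEq Al]
    (ρv σv : X → EuclideanSpace ℂ V) (inp : X → Fin n → Al)
    (v : X → Fin n → EuclideanSpace ℂ W) (Wr s ε : ℝ) :
    Hsp Al V W n →L[ℂ] Hsp Al V W n :=
  (Submodule.span ℂ (Set.range fun x : X => PsiM ρv σv inp v Wr s ε x)).subtypeL.comp
    (Submodule.orthogonalProjectionOnto
      (Submodule.span ℂ (Set.range fun x : X => PsiM ρv σv inp v Wr s ε x)))

/-- The matrix of the oracle Hamiltonian `Π_x = ∑ᵢ |i⟩⟨i| ⊗ |x_i⁻⟩⟨x_i⁻| ⊗ I_W`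
(acting as `0` on `H_O`). -/
def PiMat [DecidableEq Al] [DecidableEq W] (inp : X → Fin n → Al) (x : X) :
    Matrix (Idx Al V W n) (Idx Al V W n) ℂ :=
  fun q q' => match q, q' with
  | .inr (i, a, w), .inr (i', a', w') =>
      if i = i' ∧ w = w' then gM (inp x i) a * conj (gM (inp x i) a') else 0
  | _, _ => 0

/-- The oracle Hamiltonian `Π_x` as an operator on `H`. -/
def PiC [Fintype Al] [Fintype V] [Fintype W]
    [DecidableEq Al] [DecidableEq V] [DecidableEq W]
    (inp : X → Fin n → Al) (x : X) : Hsp Al V W n →L[ℂ] Hsp Al V W n :=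
  Matrix.toEuclideanCLM (𝕜 := ℂ) (PiMat inp x)

/-- The total Hamiltonian `H_x(s,ε) = Λ(s,ε) − Π_x`. -/
def Hx [Fintype Al] [Fintype V] [Fintype W]
    [DecidableEq Al] [DecidableEq V] [DecidableEq W]
    (ρv σv : X → EuclideanSpace ℂ V) (inp : X → Fin n → Al)
    (v : X → Fin n → EuclideanSpace ℂ W) (Wr s ε : ℝ) (x : X) :
    Hsp Al V W n →L[ℂ] Hsp Al V W n :=
  Lam ρv σv inp v Wr s ε - PiC inp x

/-- The projection `P_x(s,ε) = |ψ_x⁺(s,ε)⟩⟨ψ_x⁺(s,ε)|`. -/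
def Pproj [Fintype Al] [Fintype V] [Fintype W] [DecidableEq Al]
    (ρv σv : X → EuclideanSpace ℂ V) (inp : X → Fin n → Al)
    (u : X → Fin n → EuclideanSpace ℂ W) (Wr s ε : ℝ) (x : X) :
    Hsp Al V W n →L[ℂ] Hsp Al V W n :=
  ketbra (psiP ρv σv inp u Wr s ε x) (psiP ρv σv inp u Wr s ε x)

/-- The operator `X_x(s,ε) = (π/(2N_x(ε))) |Ψ_x⁻(s,ε)⟩⟨ψ_x⁺(s,ε)|`. -/
def Xx [Fintype Al] [Fintype V] [Fintype W] [DecidableEq Al]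
    (ρv σv : X → EuclideanSpace ℂ V) (inp : X → Fin n → Al)
    (u v : X → Fin n → EuclideanSpace ℂ W) (Wr s ε : ℝ) (x : X) :
    Hsp Al V W n →L[ℂ] Hsp Al V W n :=
  ((Real.pi / (2 * ‖PsiP ρv σv inp u Wr s ε x‖) : ℝ) : ℂ) •
    ketbra (PsiM ρv σv inp v Wr s ε x) (psiP ρv σv inp u Wr s ε x)

end AdiaConvert

open AdiaConvert

section Helpers
variable {Al V W X : Type*} {n : ℕ}

private lemma gsum [Fintype Al] [DecidableEq Al] (p q : Al) :
    ∑ a : Option Al, conj (gP p a) * gM q a = if p = q then 0 else (1/2 : ℂ) := by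
  classical
  have h2 : ((Real.sqrt 2 : ℂ))⁻¹ * ((Real.sqrt 2 : ℂ))⁻¹ = 1/2 := by
    rw [← mul_inv, ← Complex.ofReal_mul, Real.mul_self_sqrt (by norm_num)]
    norm_num
  rw [Fintype.sum_option]
  simp only [gP, gM, if_true, reduceCtorEq, if_false, Option.some.injEq, map_inv₀,
    Complex.conj_ofReal]
  by_cases h : p = q
  · subst h
    rw [Finset.sum_eq_single p]
    · simp [h2]
    · intro b _ hb; simp [hb]
    · simp
  · rw [Finset.sum_eq_zero]
    · simp [h, h2]
    · intro b _
      by_cases hbp : b = p <;> by_cases hbq : b = q <;> simp_all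

private lemma qinner [Fintype Al] [DecidableEq Al] [Fintype V] [Fintype W]
    (inp : X → Fin n → Al) (u v : X → Fin n → EuclideanSpace ℂ W) (x y : X) :
    (inner ℂ (qPart gP inp u x : Hsp Al V W n) (qPart gM inp v y) : ℂ) =
      (1/2 : ℂ) * ∑ i ∈ Finset.univ.filter (fun i => inp x i ≠ inp y i),
        (inner ℂ (u x i) (v y i) : ℂ) := by
  simp only [qPart, mk, PiLp.inner_apply, WithLp.equiv_symm_apply, PiLp.toLp_apply, RCLike.inner_apply,
    Fintype.sum_sum_type, Fintype.sum_prod_type, map_zero, zero_mul,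
    Finset.sum_const_zero, zero_add, map_mul]
  calc ∑ i : Fin n, ∑ a : Option Al, ∑ w : W,
        gM (inp y i) a * v y i w * (conj (gP (inp x i) a) * conj (u x i w))
      = ∑ i : Fin n, (∑ a : Option Al, conj (gP (inp x i) a) * gM (inp y i) a) *
          (∑ w : W, conj (u x i w) * v y i w) := by
        apply Finset.sum_congr rfl; intro i _
        rw [Finset.sum_mul_sum]
        exact Finset.sum_congr rfl fun a _ => Finset.sum_congr rfl fun w _ => by ring
    _ = ∑ i : Fin n, (if inp x i = inp y i then 0 else (1/2:ℂ)) * (inner ℂ (u x i) (v y i) : ℂ) := by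
        apply Finset.sum_congr rfl; intro i _
        rw [gsum]
        simp [PiLp.inner_apply, RCLike.inner_apply, mul_comm]
    _ = (1/2 : ℂ) * ∑ i ∈ Finset.univ.filter (fun i => inp x i ≠ inp y i),
        (inner ℂ (u x i) (v y i) : ℂ) := by
        rw [Finset.mul_sum, Finset.sum_filter]
        apply Finset.sum_congr rfl; intro i _
        by_cases h : inp x i = inp y i <;> simp [h]
end Helpers


/-- the states `|Ψ_x⁺(s,ε)⟩` and `|Ψ_y⁻(s,ε)⟩` are orthogonal for all
`x, y ∈ 𝕏`; in particular `Λ(s,ε)|Ψ_x⁺(s,ε)⟩ = 0`. -/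
theorem stmt13
    {Al V W : Type*} [Fintype Al] [DecidableEq Al] [Fintype V] [DecidableEq V]
    [Fintype W] [DecidableEq W]
    {n : ℕ} {X : Type*} [Fintype X] (inp : X → Fin n → Al)
    (ρv σv : X → EuclideanSpace ℂ V)
    (hρ : ∀ x, ‖ρv x‖ = 1) (hσ : ∀ x, ‖σv x‖ = 1)
    (Wr : ℝ) (hW : 0 < Wr)
    (u v : X → Fin n → EuclideanSpace ℂ W)
    (hu : ∀ x, ∑ i, ‖u x i‖ ^ 2 ≤ Wr) (hv : ∀ x, ∑ i, ‖v x i‖ ^ 2 ≤ Wr)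
    (hadv : ∀ x y : X,
      (inner ℂ (ρv x) (ρv y) : ℂ) - (inner ℂ (σv x) (σv y) : ℂ) =
        ∑ i ∈ Finset.univ.filter (fun i => inp x i ≠ inp y i),
          (inner ℂ (u x i) (v y i) : ℂ))
    (ε : ℝ) (hε0 : 0 < ε) (hε1 : ε ≤ 1) :
    ∀ s ∈ Set.Icc (0:ℝ) 1,
      (∀ x y : X,
        (inner ℂ (PsiP (Al := Al) ρv σv inp u Wr s ε x)
          (PsiM ρv σv inp v Wr s ε y) : ℂ) = 0) ∧
      (∀ x : X,
        Lam ρv σv inp v Wr s ε (PsiP ρv σv inp u Wr s ε x) = 0) := by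
  intro s hs
  have key : ∀ x y : X,
      (inner ℂ (PsiP (Al := Al) ρv σv inp u Wr s ε x)
        (PsiM ρv σv inp v Wr s ε y) : ℂ) = 0 := by
    intro x y
    have hcross1 : (inner ℂ (kP ρv σv s x : Hsp Al V W n) (qPart gM inp v y) : ℂ) = 0 := by
      simp [kP, qPart, mk, PiLp.inner_apply, WithLp.equiv_symm_apply, PiLp.toLp_apply, RCLike.inner_apply,
        Fintype.sum_sum_type]
    have hcross2 : (inner ℂ (qPart gP inp u x : Hsp Al V W n) (kM ρv σv s y) : ℂ) = 0 := by
      simp [kM, qPart, mk, PiLp.inner_apply, WithLp.equiv_symm_apply, PiLp.toLp_apply, RCLike.inner_apply,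
        Fintype.sum_sum_type]
    have hkk : (inner ℂ (kP ρv σv s x : Hsp Al V W n) (kM ρv σv s y) : ℂ) =
        ((Real.sin (θ s) : ℂ) * (Real.cos (θ s) : ℂ)) *
          ((inner ℂ (σv x) (σv y) : ℂ) - (inner ℂ (ρv x) (ρv y) : ℂ)) := by
      simp only [kP, kM, mk, PiLp.inner_apply, WithLp.equiv_symm_apply, PiLp.toLp_apply, RCLike.inner_apply,
        Fintype.sum_sum_type, Fintype.sum_prod_type, Fin.sum_univ_two, map_zero, zero_mul,
        Finset.sum_const_zero, add_zero]
      simp only [show ((0:Fin 2) = 0) = True by simp, show ((1:Fin 2) = 0) = False by simp,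
        if_true, if_false, map_mul, Complex.conj_ofReal]
      rw [mul_sub, ← Finset.sum_add_distrib, Finset.mul_sum, Finset.mul_sum,
        ← Finset.sum_sub_distrib]
      exact Finset.sum_congr rfl fun j _ => by ring
    have hc : ((ε / Real.sqrt Wr : ℝ) : ℂ) * ((ξ s * (Real.sqrt Wr / ε) : ℝ) : ℂ) =
        2 * (Real.cos (θ s) : ℂ) * (Real.sin (θ s) : ℂ) := by
      rw [← Complex.ofReal_mul]
      have : (ε / Real.sqrt Wr) * (ξ s * (Real.sqrt Wr / ε)) = ξ s := by
        field_simp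
      rw [this, ξ]
      push_cast
      ring
    rw [PsiP, PsiM, inner_add_left, inner_add_right, inner_add_right, inner_smul_left,
      inner_smul_right, inner_smul_right, inner_smul_left, hcross1, hcross2, hkk,
      qinner inp u v x y]
    simp only [Complex.conj_ofReal]
    have hT := hadv x y
    linear_combination
      ((∑ i ∈ Finset.filter (fun i => inp x i ≠ inp y i) Finset.univ,
        (inner ℂ (u x i) (v y i) : ℂ)) / 2) * hc -
      ((Real.cos (θ s) : ℂ) * (Real.sin (θ s) : ℂ)) * hT
  refine ⟨key, ?_⟩
  intro x
  have hmem : PsiP (Al := Al) ρv σv inp u Wr s ε x ∈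
      (Submodule.span ℂ (Set.range fun y : X => PsiM ρv σv inp v Wr s ε y))ᗮ := by
    rw [Submodule.mem_orthogonal']
    intro w hw
    induction hw using Submodule.span_induction with
    | mem w hw => obtain ⟨y, rfl⟩ := hw; exact key x y
    | zero => simp
    | add a b _ _ ha hb => rw [inner_add_right, ha, hb, add_zero]
    | smul c a _ ha => rw [inner_smul_right, ha, mul_zero]
  simp only [Lam, ContinuousLinearMap.comp_apply,
    Submodule.orthogonalProjectionOnto_apply_of_mem_orthogonal hmem]
  simp
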